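/- Let k ≥ 1 be an integer and let {X_i}_{i≥1} be i.i.d. positive-integer-valued random variables with weights W_n = X_1 + ... + X_n. The event that the sequence {W_n}_{n≥1} is asymptotically k-complete is independent of the sigma-algebra generated by (X_1, ..., X_m) for every m; in particular it is a tail event of the sequence {X_i}_{i≥1} and hence has probability 0 or 1. The same holds for the event that {W_n}_{n≥1} is weakly asymptotically k-complete. -/

import Mathlib

open MeasureTheory ProbabilityTheory Filter Set

namespace Stmt11Aux


/-- partial sums of gaps. -/
def pw (g : ℕ → ℕ) (n : ℕ) : ℕ := ∑ i ∈ Finset.range n, g i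

def Gc (k : ℕ) : Set (ℕ → ℕ) :=
  {g | ∃ N : ℕ, ∀ m : ℕ, N ≤ m → ∃ s : Finset ℕ, s.card = k ∧ (∀ i ∈ s, 1 ≤ i) ∧
    ∑ i ∈ s, pw g i = m}

def Gw (k : ℕ) : Set (ℕ → ℕ) :=
  {g | ∃ N : ℕ, ∀ m : ℕ, N ≤ m → ∃ f : Fin k → ℕ, (∀ j, 1 ≤ f j) ∧
    ∑ j, pw g (f j) = m}

lemma pw_succ (g : ℕ → ℕ) (n : ℕ) : pw g (n + 1) = g 0 + pw (fun i => g (i + 1)) n := by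
  simpa [pw, add_comm] using Finset.sum_range_succ' g n

lemma measurable_pw (n : ℕ) : Measurable fun g : ℕ → ℕ => pw g n :=
  Finset.measurable_sum _ (fun i _ => measurable_pi_apply i)

lemma Gc_shift {k : ℕ} {g : ℕ → ℕ} (h : (fun i => g (i + 1)) ∈ Gc k) : g ∈ Gc k := by
  obtain ⟨N, hN⟩ := h
  refine ⟨N + k * g 0, fun m hm => ?_⟩
  have hK : k * g 0 ≤ m := by omega
  obtain ⟨s, hcard, _, hsum⟩ := hN (m - k * g 0) (Nat.le_sub_of_add_le hm)
  refine ⟨s.map ⟨Nat.succ, Nat.succ_injective⟩, by simpa using hcard, ?_, ?_⟩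
  · intro i hi
    simp only [Finset.mem_map, Function.Embedding.coeFn_mk] at hi
    obtain ⟨j, _, rfl⟩ := hi
    omega
  · rw [Finset.sum_map]
    simp only [Function.Embedding.coeFn_mk]
    have h1 : ∀ j ∈ s, pw g (Nat.succ j) = g 0 + pw (fun i => g (i + 1)) j :=
      fun j _ => pw_succ g j
    rw [Finset.sum_congr rfl h1, Finset.sum_add_distrib, hsum, Finset.sum_const, hcard,
      smul_eq_mul]
    exact Nat.add_sub_cancel' hK

lemma Gw_shift {k : ℕ} {g : ℕ → ℕ} (h : (fun i => g (i + 1)) ∈ Gw k) : g ∈ Gw k := by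
  obtain ⟨N, hN⟩ := h
  refine ⟨N + k * g 0, fun m hm => ?_⟩
  have hK : k * g 0 ≤ m := by omega
  obtain ⟨f, hf1, hsum⟩ := hN (m - k * g 0) (Nat.le_sub_of_add_le hm)
  refine ⟨fun j => f j + 1, fun j => Nat.le_add_left 1 (f j), ?_⟩
  have h1 : ∀ j : Fin k, pw g (f j + 1) = g 0 + pw (fun i => g (i + 1)) (f j) :=
    fun j => pw_succ g (f j)
  rw [Finset.sum_congr rfl (fun j _ => h1 j), Finset.sum_add_distrib, hsum, Finset.sum_const,
    Finset.card_univ, Fintype.card_fin, smul_eq_mul]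
  exact Nat.add_sub_cancel' hK

lemma measurableSet_Gc (k : ℕ) : MeasurableSet (Gc k) := by
  have : Gc k = ⋃ N : ℕ, ⋂ m : ℕ, ⋂ (_ : N ≤ m), ⋃ s : Finset ℕ,
      ⋃ (_ : s.card = k ∧ ∀ i ∈ s, 1 ≤ i), {g : ℕ → ℕ | ∑ i ∈ s, pw g i = m} := by
    ext g
    simp only [Gc, Set.mem_setOf_eq, Set.mem_iUnion, Set.mem_iInter]
    constructor
    · rintro ⟨N, hN⟩
      exact ⟨N, fun m hm => by obtain ⟨s, h1, h2, h3⟩ := hN m hm; exact ⟨s, ⟨h1, h2⟩, h3⟩⟩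
    · rintro ⟨N, hN⟩
      exact ⟨N, fun m hm => by obtain ⟨s, ⟨h1, h2⟩, h3⟩ := hN m hm; exact ⟨s, h1, h2, h3⟩⟩
  rw [this]
  refine MeasurableSet.iUnion fun N => MeasurableSet.iInter fun m => MeasurableSet.iInter
    fun _ => MeasurableSet.iUnion fun s => MeasurableSet.iUnion fun _ => ?_
  exact (Finset.measurable_sum s (fun i _ => measurable_pw i)) (measurableSet_singleton m)

lemma measurableSet_Gw (k : ℕ) : MeasurableSet (Gw k) := by
  have : Gw k = ⋃ N : ℕ, ⋂ m : ℕ, ⋂ (_ : N ≤ m), ⋃ f : Fin k → ℕ,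
      ⋃ (_ : ∀ j, 1 ≤ f j), {g : ℕ → ℕ | ∑ j, pw g (f j) = m} := by
    ext g
    simp only [Gw, Set.mem_setOf_eq, Set.mem_iUnion, Set.mem_iInter]
    constructor
    · rintro ⟨N, hN⟩
      exact ⟨N, fun m hm => by obtain ⟨f, h1, h2⟩ := hN m hm; exact ⟨f, h1, h2⟩⟩
    · rintro ⟨N, hN⟩
      exact ⟨N, fun m hm => by obtain ⟨f, h1, h2⟩ := hN m hm; exact ⟨f, h1, h2⟩⟩
  rw [this]
  refine MeasurableSet.iUnion fun N => MeasurableSet.iInter fun m => MeasurableSet.iInter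
    fun _ => MeasurableSet.iUnion fun f => MeasurableSet.iUnion fun _ => ?_
  exact (Finset.measurable_sum _ (fun j _ => measurable_pw (f j))) (measurableSet_singleton m)

lemma sum_Icc_one {M : Type*} [AddCommMonoid M] (f : ℕ → M) (n : ℕ) :
    ∑ i ∈ Finset.Icc 1 n, f i = ∑ i ∈ Finset.range n, f (i + 1) := by
  induction n with
  | zero => simp
  | succ n ih => rw [Finset.sum_range_succ, ← ih, Finset.sum_Icc_succ_top (by omega)]


variable {Ω : Type*} [MeasurableSpace Ω] {μ : Measure Ω} [IsProbabilityMeasure μ]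
  {X : ℕ → Ω → ℕ}

def Φ (X : ℕ → Ω → ℕ) (m : ℕ) (ω : Ω) : ℕ → ℕ := fun i => X (m + i + 1) ω

lemma measurable_Φ (hmeas : ∀ i, Measurable (X i)) (m : ℕ) : Measurable (Φ X m) :=
  measurable_pi_lambda _ (fun _ => hmeas _)

lemma map_restrict_eq (μ : Measure Ω) [IsProbabilityMeasure μ] (X : ℕ → Ω → ℕ)

    (hmeas : ∀ i, Measurable (X i))
    (hindep : iIndepFun X μ)
    (hident : ∀ i, IdentDistrib (X i) (X 1) μ μ) (m : ℕ) (s : Finset ℕ) :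
    Measure.map (fun ω => s.restrict (Φ X m ω)) μ
      = Measure.pi (fun _ : s => Measure.map (X 1) μ) := by
  have hV : Measurable (fun ω => s.restrict (Φ X m ω)) :=
    measurable_pi_lambda _ (fun _ => hmeas _)
  refine (Measure.pi_eq fun E hE => ?_).symm
  rw [Measure.map_apply hV (MeasurableSet.univ_pi hE)]
  classical
  set sets : ℕ → Set ℕ := fun n => ⋂ (i : s) (_ : m + ↑i + 1 = n), E i with hsets
  have hset : (fun ω => s.restrict (Φ X m ω)) ⁻¹' Set.pi Set.univ E
      = ⋂ n ∈ s.image (fun i => m + i + 1), X n ⁻¹' sets n := by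
    ext ω
    simp only [Set.mem_preimage, Set.mem_univ_pi, Finset.restrict, Φ, Set.mem_iInter,
      Finset.mem_image, hsets, Set.mem_preimage]
    constructor
    · rintro h n ⟨j, hj, rfl⟩ i hi
      have hij : (↑i : ℕ) = j := by omega
      rw [← hij]
      exact h i
    · intro h i
      exact h (m + ↑i + 1) ⟨↑i, i.2, rfl⟩ i rfl
  rw [hset, (iIndepFun_iff_measure_inter_preimage_eq_mul.mp hindep)
    (s.image fun i => m + i + 1) (fun _ _ => MeasurableSet.of_discrete)]
  rw [Finset.prod_image (fun a _ b _ h => by omega)]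
  rw [Finset.univ_eq_attach, ← Finset.prod_attach s
    (fun j => μ (X (m + j + 1) ⁻¹' sets (m + j + 1)))]
  refine Finset.prod_congr rfl (fun i _ => ?_)
  have hEi : sets (m + ↑i + 1) = E i := by
    ext x
    simp only [hsets, Set.mem_iInter]
    constructor
    · intro h
      exact h i rfl
    · intro hx i' hi'
      have : i' = i := Subtype.ext (by omega)
      rw [this]
      exact hx
  rw [hEi, Measure.map_apply (hmeas 1) MeasurableSet.of_discrete]
  exact (hident (m + ↑i + 1)).measure_mem_eq MeasurableSet.of_discrete

lemma map_Φ_eq (hmeas : ∀ i, Measurable (X i))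
    (hindep : iIndepFun X μ)
    (hident : ∀ i, IdentDistrib (X i) (X 1) μ μ) (m : ℕ) :
    Measure.map (Φ X m) μ = Measure.map (Φ X 0) μ := by
  haveI h1 : IsProbabilityMeasure (Measure.map (Φ X m) μ) :=
    Measure.isProbabilityMeasure_map (measurable_Φ hmeas m).aemeasurable
  haveI h2 : IsProbabilityMeasure (Measure.map (Φ X 0) μ) :=
    Measure.isProbabilityMeasure_map (measurable_Φ hmeas 0).aemeasurable
  refine ext_of_generate_finite _ generateFrom_measurableCylinders.symm
    isPiSystem_measurableCylinders (fun t ht => ?_) (by simp)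
  obtain ⟨s, S, hS, rfl⟩ := (mem_measurableCylinders t).mp ht
  rw [Measure.map_apply (measurable_Φ hmeas m) (hS.cylinder s),
    Measure.map_apply (measurable_Φ hmeas 0) (hS.cylinder s)]
  show μ ((fun ω => s.restrict (Φ X m ω)) ⁻¹' S) = μ ((fun ω => s.restrict (Φ X 0 ω)) ⁻¹' S)
  have hVm : Measurable (fun ω => s.restrict (Φ X m ω)) :=
    measurable_pi_lambda _ (fun _ => hmeas _)
  have hV0 : Measurable (fun ω => s.restrict (Φ X 0 ω)) :=
    measurable_pi_lambda _ (fun _ => hmeas _)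
  rw [← Measure.map_apply hVm hS, ← Measure.map_apply hV0 hS,
    map_restrict_eq μ X hmeas hindep hident m s, map_restrict_eq μ X hmeas hindep hident 0 s]

/-- the key zero-one law for shift-stable measurable path events -/
lemma zero_or_one (hmeas : ∀ i, Measurable (X i))
    (hindep : iIndepFun X μ)
    (hident : ∀ i, IdentDistrib (X i) (X 1) μ μ)
    (G : Set (ℕ → ℕ)) (hGmeas : MeasurableSet G)
    (hGshift : ∀ g : ℕ → ℕ, (fun i => g (i + 1)) ∈ G → g ∈ G) :
    μ ((fun ω i => X (i + 1) ω) ⁻¹' G) = 0 ∨ μ ((fun ω i => X (i + 1) ω) ⁻¹' G) = 1 := by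
  set Cm : ℕ → Set Ω := fun m => Φ X m ⁻¹' G with hCm
  have hΦ0 : (fun ω (i : ℕ) => X (i + 1) ω) = Φ X 0 := by
    funext ω i
    simp [Φ]
  rw [hΦ0]
  show μ (Cm 0) = 0 ∨ μ (Cm 0) = 1
  have hCm_meas : ∀ m, MeasurableSet (Cm m) := fun m => (measurable_Φ hmeas m) hGmeas
  have hanti : Antitone Cm := by
    refine antitone_nat_of_succ_le (fun m ω hω => ?_)
    apply hGshift
    have : (fun i => Φ X m ω (i + 1)) = Φ X (m + 1) ω := by
      funext i
      show X (m + (i + 1) + 1) ω = X (m + 1 + i + 1) ω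
      congr 1
      omega
    rw [this]
    exact hω
  have hconst : ∀ m, μ (Cm m) = μ (Cm 0) := by
    intro m
    rw [hCm]
    rw [← Measure.map_apply (measurable_Φ hmeas m) hGmeas,
      ← Measure.map_apply (measurable_Φ hmeas 0) hGmeas, map_Φ_eq hmeas hindep hident m]
  set C' : Set Ω := ⋂ m, Cm m with hC'
  have hμC' : μ C' = μ (Cm 0) := by
    rw [hC', Directed.measure_iInter (fun m => (hCm_meas m).nullMeasurableSet)
      (hanti.directed_ge) ⟨0, measure_ne_top μ _⟩]
    exact le_antisymm (iInf_le _ 0) (le_iInf fun m => le_of_eq (hconst m).symm)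
  rw [← hμC']
  refine measure_zero_or_one_of_measurableSet_limsup_atTop
    (s := fun i => MeasurableSpace.comap (X i) inferInstance)
    (fun i => (hmeas i).comap_le) hindep.iIndep ?_
  rw [limsup_eq_iInf_iSup_of_nat, MeasurableSpace.measurableSet_iInf]
  intro n
  have hC'n : C' = ⋂ m, Cm (n + m) := by
    apply subset_antisymm
    · exact fun x hx => Set.mem_iInter.2 fun m => Set.mem_iInter.1 hx (n + m)
    · intro x hx
      refine Set.mem_iInter.2 fun m => hanti (Nat.le_add_left m n) ?_
      exact Set.mem_iInter.1 hx m
  rw [hC'n]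
  refine MeasurableSet.iInter fun m => ?_
  have hΦn : Measurable[⨆ i, ⨆ (_ : n ≤ i), MeasurableSpace.comap (X i) inferInstance]
      (Φ X (n + m)) := by
    rw [measurable_iff_comap_le, MeasurableSpace.pi, MeasurableSpace.comap_iSup]
    refine iSup_le fun a => ?_
    rw [MeasurableSpace.comap_comp]
    have heq : ((fun f : ℕ → ℕ => f a) ∘ Φ X (n + m)) = X (n + m + a + 1) := rfl
    rw [heq]
    exact le_iSup₂ (f := fun j (_ : n ≤ j) => MeasurableSpace.comap (X j) inferInstance)
      (n + m + a + 1) (by omega)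
  exact hΦn hGmeas


lemma indep_of_01 {Ω : Type*} [MeasurableSpace Ω] (μ : Measure Ω) [IsProbabilityMeasure μ]
    {C : Set Ω} (hCmeas : MeasurableSet C) (h01 : μ C = 0 ∨ μ C = 1) (s : Set Ω) :
    μ (C ∩ s) = μ C * μ s := by
  rcases h01 with h | h
  · rw [h, zero_mul]
    exact le_antisymm (le_trans (measure_mono Set.inter_subset_left) h.le) zero_le
  · rw [h, one_mul]
    have hcompl : μ Cᶜ = 0 := by
      rw [measure_compl hCmeas (measure_ne_top μ C), h, measure_univ, tsub_self]
    refine le_antisymm (measure_mono Set.inter_subset_right) ?_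
    calc μ s = μ ((C ∩ s) ∪ (Cᶜ ∩ s)) := by
          rw [← Set.union_inter_distrib_right, Set.union_compl_self, Set.univ_inter]
    _ ≤ μ (C ∩ s) + μ (Cᶜ ∩ s) := measure_union_le _ _
    _ ≤ μ (C ∩ s) + 0 := by
          gcongr
          exact le_trans (measure_mono Set.inter_subset_left) hcompl.le
    _ = μ (C ∩ s) := add_zero _

end Stmt11Aux

open Stmt11Aux in
/-- For i.i.d. positive integer gaps, the event that the weight sequence is
asymptotically `k`-complete is independent of `σ(X₁,…,X_m)` for every `m`, and
has probability `0` or `1`; the same holds for weak asymptotic `k`-completeness. -/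
theorem stmt11
    {Ω : Type*} [MeasurableSpace Ω] (μ : Measure Ω) [IsProbabilityMeasure μ]
    (k : ℕ) (hk : 1 ≤ k)
    (X : ℕ → Ω → ℕ)
    (hmeas : ∀ i, Measurable (X i))
    (hpos : ∀ i ω, 0 < X i ω)
    (hindep : iIndepFun X μ)
    (hident : ∀ i, IdentDistrib (X i) (X 1) μ μ)
    (W : ℕ → Ω → ℕ)
    (hW : ∀ n ω, W n ω = ∑ i ∈ Finset.Icc 1 n, X i ω)
    (C : Set Ω)
    (hC : C = {ω | ∃ N : ℕ, ∀ m : ℕ, N ≤ m →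
      ∃ s : Finset ℕ, s.card = k ∧ (∀ i ∈ s, 1 ≤ i) ∧ ∑ i ∈ s, W i ω = m})
    (Cw : Set Ω)
    (hCw : Cw = {ω | ∃ N : ℕ, ∀ m : ℕ, N ≤ m →
      ∃ f : Fin k → ℕ, (∀ j, 1 ≤ f j) ∧ ∑ j, W (f j) ω = m}) :
    (∀ m : ℕ, ∀ s : Set Ω,
        MeasurableSet[⨆ i ∈ Finset.Icc 1 m, MeasurableSpace.comap (X i) inferInstance] s →
        μ (C ∩ s) = μ C * μ s) ∧
    (μ C = 0 ∨ μ C = 1) ∧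
    (∀ m : ℕ, ∀ s : Set Ω,
        MeasurableSet[⨆ i ∈ Finset.Icc 1 m, MeasurableSpace.comap (X i) inferInstance] s →
        μ (Cw ∩ s) = μ Cw * μ s) ∧
    (μ Cw = 0 ∨ μ Cw = 1) := by
  have hWpw : ∀ (n : ℕ) (ω : Ω), W n ω = pw (fun j => X (j + 1) ω) n := by
    intro n ω
    rw [hW, sum_Icc_one]
    rfl
  have hpath : Measurable (fun ω (i : ℕ) => X (i + 1) ω) :=
    measurable_pi_lambda _ (fun _ => hmeas _)
  have hXC : C = (fun ω (i : ℕ) => X (i + 1) ω) ⁻¹' Gc k := by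
    rw [hC]
    ext ω
    simp only [Set.mem_setOf_eq, Set.mem_preimage, Gc]
    constructor
    · rintro ⟨N, hN⟩
      refine ⟨N, fun m hm => ?_⟩
      obtain ⟨s, h1, h2, h3⟩ := hN m hm
      exact ⟨s, h1, h2, by rw [← h3]; exact Finset.sum_congr rfl fun i _ => (hWpw i ω).symm⟩
    · rintro ⟨N, hN⟩
      refine ⟨N, fun m hm => ?_⟩
      obtain ⟨s, h1, h2, h3⟩ := hN m hm
      exact ⟨s, h1, h2, by rw [← h3]; exact Finset.sum_congr rfl fun i _ => hWpw i ω⟩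
  have hXCw : Cw = (fun ω (i : ℕ) => X (i + 1) ω) ⁻¹' Gw k := by
    rw [hCw]
    ext ω
    simp only [Set.mem_setOf_eq, Set.mem_preimage, Gw]
    constructor
    · rintro ⟨N, hN⟩
      refine ⟨N, fun m hm => ?_⟩
      obtain ⟨f, h1, h2⟩ := hN m hm
      exact ⟨f, h1, by rw [← h2]; exact Finset.sum_congr rfl fun j _ => (hWpw (f j) ω).symm⟩
    · rintro ⟨N, hN⟩
      refine ⟨N, fun m hm => ?_⟩
      obtain ⟨f, h1, h2⟩ := hN m hm
      exact ⟨f, h1, by rw [← h2]; exact Finset.sum_congr rfl fun j _ => hWpw (f j) ω⟩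
  have h01C : μ C = 0 ∨ μ C = 1 := by
    rw [hXC]
    exact zero_or_one hmeas hindep hident _ (measurableSet_Gc k) (fun g hg => Gc_shift hg)
  have h01Cw : μ Cw = 0 ∨ μ Cw = 1 := by
    rw [hXCw]
    exact zero_or_one hmeas hindep hident _ (measurableSet_Gw k) (fun g hg => Gw_shift hg)
  have hCmeasSet : MeasurableSet C := hXC ▸ hpath (measurableSet_Gc k)
  have hCwmeasSet : MeasurableSet Cw := hXCw ▸ hpath (measurableSet_Gw k)
  exact ⟨fun m s _ => indep_of_01 μ hCmeasSet h01C s, h01C,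
    fun m s _ => indep_of_01 μ hCwmeasSet h01Cw s, h01Cw⟩
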